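/- Let f(x) = x² − x − 3 and let F be the two-dimensional rational map F(x,y) = (x′,y′) with x′ = x + 2y²(−x² + x + y²)/((x−1−y)(x²−1+y−y²)) and y′ = y²(x−1+y)/((x−1−y)(x²−1+y−y²)). Then F is semi-conjugate to f through Ψ(x,y) = (x² − 1 − xy − 2y²)/y: for all (x,y) ∈ ℝ² with y ≠ 0, x−1+y ≠ 0 and (x−1−y)(x²−1+y−y²) ≠ 0 one has Ψ(F(x,y)) = f(Ψ(x,y)). -/

import Mathlib

/-- The quadratic polynomial `f(x) = x² - x - 3`. -/
noncomputable def hanoiF (x : ℝ) : ℝ := x ^ 2 - x - 3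

/-- The two-dimensional rational map `F(x,y) = (x', y')`. -/
noncomputable def hanoiMap (p : ℝ × ℝ) : ℝ × ℝ :=
  (p.1 + 2 * p.2 ^ 2 * (-p.1 ^ 2 + p.1 + p.2 ^ 2) /
      ((p.1 - 1 - p.2) * (p.1 ^ 2 - 1 + p.2 - p.2 ^ 2)),
   p.2 ^ 2 * (p.1 - 1 + p.2) /
      ((p.1 - 1 - p.2) * (p.1 ^ 2 - 1 + p.2 - p.2 ^ 2)))

/-- The semi-conjugating map `Ψ(x,y) = (x² - 1 - xy - 2y²)/y`. -/
noncomputable def hanoiPsi (x y : ℝ) : ℝ := (x ^ 2 - 1 - x * y - 2 * y ^ 2) / y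

/-- The two-dimensional rational map `F` is semi-conjugate to the one-dimensional
polynomial map `f(x) = x² - x - 3` through `Ψ`. -/
theorem psi_semiconjugates_F_to_f (x y : ℝ) (hy : y ≠ 0) (hA : x - 1 + y ≠ 0)
    (hLK : (x - 1 - y) * (x ^ 2 - 1 + y - y ^ 2) ≠ 0) :
    hanoiPsi (hanoiMap (x, y)).1 (hanoiMap (x, y)).2 = hanoiF (hanoiPsi x y) := by
  simp only [hanoiPsi, hanoiMap, hanoiF]
  have h2 : y ^ 2 * (x - 1 + y) / ((x - 1 - y) * (x ^ 2 - 1 + y - y ^ 2)) ≠ 0 := by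
    exact div_ne_zero (mul_ne_zero (pow_ne_zero 2 hy) hA) hLK
  have hL : x - 1 - y ≠ 0 := left_ne_zero_of_mul hLK
  have hK : x ^ 2 - 1 + y - y ^ 2 ≠ 0 := right_ne_zero_of_mul hLK
  field_simp
  ring
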